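/- arXiv:1704.01652 — 5 statements merged into one kernel-verified Lean document; each statement's English description precedes it below -/
import Mathlib

section
/- The independence system M(k,h,m) is k-extendible: for every independent sets C ⊆ D and element u ∉ D with C ∪ {u} independent, there exists Y ⊆ D \ C with |Y| ≤ k such that (D \ Y) ∪ {u} is independent. -/
/-- `g_{m,k}(x) = min{x, 2km/h} + max{(x - 2km/h)/k, 0}` -/
noncomputable def g (k h m : ℕ) (x : ℝ) : ℝ :=
  min x (2 * k * m / h) + max ((x - 2 * k * m / h) / k) 0

/-- The ground set `N = ⋃_{i=1}^h H_i` with `H_i` disjoint of size `km` is modeled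
as `Fin h × Fin (k*m)`, where `H_i = {i} × Fin (k*m)` and `H_1` is `{0} × Fin (k*m)`. -/
abbrev Elem (k h m : ℕ) := Fin h × Fin (k * m)

/-- `Σ(S) = g_{m,k}(|S ∩ H_1|) + |S \ H_1|`. -/
noncomputable def Sigma' (k h m : ℕ) (S : Finset (Elem k h m)) : ℝ :=
  g k h m ((S.filter (fun p => (p.1 : ℕ) = 0)).card) +
    ((S.filter (fun p => (p.1 : ℕ) ≠ 0)).card : ℝ)

/-- `S` is independent in `M(k,h,m)` iff `g_{m,k}(|S ∩ H_1|) + |S \ H_1| ≤ m`. -/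
noncomputable def Indep (k h m : ℕ) (S : Finset (Elem k h m)) : Prop :=
  Sigma' k h m S ≤ (m : ℝ)

lemma max_zero_of_nonpos {K a : ℝ} (hK : 0 < K) (ha : a ≤ 0) : max (a / K) 0 = 0 :=
  max_eq_right (div_nonpos_of_nonpos_of_nonneg ha hK.le)

lemma max_of_nonneg' {K a : ℝ} (hK : 0 < K) (ha : 0 ≤ a) : max (a / K) 0 = a / K :=
  max_eq_left (div_nonneg ha hK.le)

lemma g_mono (k h m : ℕ) (hk : 0 < k) {x y : ℝ} (hxy : x ≤ y) : g k h m x ≤ g k h m y := by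
  have hK : (0:ℝ) < k := by exact_mod_cast hk
  unfold g
  gcongr

lemma g_add_le (k h m : ℕ) (hk : 0 < k) {x y : ℝ} (hxy : y ≤ x) :
    g k h m x ≤ g k h m y + (x - y) := by
  have hK1 : (1:ℝ) ≤ k := by exact_mod_cast hk
  have hK0 : (0:ℝ) < k := by linarith
  unfold g
  set t := 2*(k:ℝ)*m/h with ht
  rcases le_total x t with h1 | h1 <;> rcases le_total y t with h2 | h2
  · rw [min_eq_left h1, min_eq_left h2, max_zero_of_nonpos hK0 (by linarith : x - t ≤ 0),
      max_zero_of_nonpos hK0 (by linarith : y - t ≤ 0)]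
    linarith
  · have hx : x = t := le_antisymm h1 (le_trans h2 hxy)
    have hy : y = t := le_antisymm (hx ▸ hxy) h2
    simp [hx, hy]
  · rw [min_eq_right h1, min_eq_left h2, max_of_nonneg' hK0 (by linarith : (0:ℝ) ≤ x - t),
      max_zero_of_nonpos hK0 (by linarith : y - t ≤ 0)]
    have := div_le_self (by linarith : (0:ℝ) ≤ x - t) hK1
    linarith
  · rw [min_eq_right h1, min_eq_right h2, max_of_nonneg' hK0 (by linarith : (0:ℝ) ≤ x - t),
      max_of_nonneg' hK0 (by linarith : (0:ℝ) ≤ y - t)]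
    have h3 : (x-t)/k - (y-t)/k = (x-y)/k := by ring
    have h4 := div_le_self (by linarith : (0:ℝ) ≤ x - y) hK1
    linarith

lemma g_div_le (k h m : ℕ) (hk : 0 < k) {x y : ℝ} (hxy : y ≤ x) :
    g k h m y + (x - y)/k ≤ g k h m x := by
  have hK1 : (1:ℝ) ≤ k := by exact_mod_cast hk
  have hK0 : (0:ℝ) < k := by linarith
  unfold g
  set t := 2*(k:ℝ)*m/h with ht
  rcases le_total x t with h1 | h1 <;> rcases le_total y t with h2 | h2
  · rw [min_eq_left h1, min_eq_left h2, max_zero_of_nonpos hK0 (by linarith : x - t ≤ 0),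
      max_zero_of_nonpos hK0 (by linarith : y - t ≤ 0)]
    have := div_le_self (by linarith : (0:ℝ) ≤ x - y) hK1
    linarith
  · have hx : x = t := le_antisymm h1 (le_trans h2 hxy)
    have hy : y = t := le_antisymm (hx ▸ hxy) h2
    simp [hx, hy]
  · rw [min_eq_right h1, min_eq_left h2, max_of_nonneg' hK0 (by linarith : (0:ℝ) ≤ x - t),
      max_zero_of_nonpos hK0 (by linarith : y - t ≤ 0)]
    have h3 : (x-y)/k = (x-t)/k + (t-y)/k := by ring
    have h4 := div_le_self (by linarith : (0:ℝ) ≤ t - y) hK1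
    linarith
  · rw [min_eq_right h1, min_eq_right h2, max_of_nonneg' hK0 (by linarith : (0:ℝ) ≤ x - t),
      max_of_nonneg' hK0 (by linarith : (0:ℝ) ≤ y - t)]
    have h3 : (x-t)/k - (y-t)/k = (x-y)/k := by ring
    linarith

/-- `M(k,h,m)` is `k`-extendible. -/
theorem M_k_extendible (k h m : ℕ) (hk : 0 < k) (hh : 0 < h) (hm : 0 < m)
    (hdiv : 2 * k ∣ h) :
    ∀ C D : Finset (Elem k h m), ∀ u : Elem k h m,
      C ⊆ D → Indep k h m C → Indep k h m D → u ∉ D → Indep k h m (insert u C) →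
        ∃ Y ⊆ D \ C, Y.card ≤ k ∧ Indep k h m (insert u (D \ Y)) := by
  intro C D u hCD hC hD huD hCu
  by_cases hcard : (D \ C).card ≤ k
  · refine ⟨D \ C, subset_rfl, hcard, ?_⟩
    have : D \ (D \ C) = C := by
      ext x
      simp only [Finset.mem_sdiff, not_and, not_not]
      constructor
      · rintro ⟨hxD, h2⟩; exact h2 hxD
      · intro hxC; exact ⟨hCD hxC, fun _ => hxC⟩
    rwa [this]
  · obtain ⟨Y, hYsub, hYcard⟩ :=
      Finset.exists_subset_card_eq (le_of_lt (lt_of_not_ge hcard))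
    refine ⟨Y, hYsub, hYcard.le, ?_⟩
    have hYD : Y ⊆ D := hYsub.trans Finset.sdiff_subset
    have huDY : u ∉ D \ Y := fun hx => huD (Finset.sdiff_subset hx)
    set P : Elem k h m → Prop := fun p => (p.1 : ℕ) = 0 with hP
    -- filter of sdiff
    have hsd1 : (D \ Y).filter (fun p => (p.1 : ℕ) = 0)
        = D.filter (fun p => (p.1 : ℕ) = 0) \ Y.filter (fun p => (p.1 : ℕ) = 0) := by
      ext p; simp [Finset.mem_filter, Finset.mem_sdiff]; tauto
    have hsd2 : (D \ Y).filter (fun p => (p.1 : ℕ) ≠ 0)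
        = D.filter (fun p => (p.1 : ℕ) ≠ 0) \ Y.filter (fun p => (p.1 : ℕ) ≠ 0) := by
      ext p; simp [Finset.mem_filter, Finset.mem_sdiff]; tauto
    have hsub1 : Y.filter (fun p => (p.1 : ℕ) = 0) ⊆ D.filter (fun p => (p.1 : ℕ) = 0) :=
      Finset.filter_subset_filter _ hYD
    have hsub2 : Y.filter (fun p => (p.1 : ℕ) ≠ 0) ⊆ D.filter (fun p => (p.1 : ℕ) ≠ 0) :=
      Finset.filter_subset_filter _ hYD
    set aD := (D.filter (fun p => (p.1 : ℕ) = 0)).card with haD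
    set bD := (D.filter (fun p => (p.1 : ℕ) ≠ 0)).card with hbD
    set ay := (Y.filter (fun p => (p.1 : ℕ) = 0)).card with hay
    set by' := (Y.filter (fun p => (p.1 : ℕ) ≠ 0)).card with hby
    have hc1 : ((D \ Y).filter (fun p => (p.1 : ℕ) = 0)).card = aD - ay := by
      rw [hsd1, Finset.card_sdiff_of_subset hsub1]
    have hc2 : ((D \ Y).filter (fun p => (p.1 : ℕ) ≠ 0)).card = bD - by' := by
      rw [hsd2, Finset.card_sdiff_of_subset hsub2]
    have hayk : ay + by' = k := by
      rw [hay, hby, Finset.card_filter_add_card_filter_not, hYcard]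
    have hale : ay ≤ aD := Finset.card_le_card hsub1
    have hble : by' ≤ bD := Finset.card_le_card hsub2
    -- now compute Sigma' of insert
    have hmain : Sigma' k h m (insert u (D \ Y)) ≤ Sigma' k h m D := by
      by_cases hu : (u.1 : ℕ) = 0
      · have e1 : (insert u (D \ Y)).filter (fun p => (p.1 : ℕ) = 0)
            = insert u ((D \ Y).filter (fun p => (p.1 : ℕ) = 0)) := by
          rw [Finset.filter_insert, if_pos hu]
        have e2 : (insert u (D \ Y)).filter (fun p => (p.1 : ℕ) ≠ 0)
            = (D \ Y).filter (fun p => (p.1 : ℕ) ≠ 0) := by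
          rw [Finset.filter_insert, if_neg (by simpa using hu)]
        have e1c : ((insert u (D \ Y)).filter (fun p => (p.1 : ℕ) = 0)).card
            = (aD - ay) + 1 := by
          rw [e1, Finset.card_insert_of_notMem (fun hx => huDY (Finset.filter_subset _ _ hx)), hc1]
        unfold Sigma'
        rw [e1c, e2, hc2]
        -- goal: g (aD - ay + 1) + (bD - by') ≤ g aD + bD
        by_cases hay0 : ay = 0
        · have hbk : by' = k := by omega
          have hble' : k ≤ bD := hbk ▸ hble
          have n1 : aD - ay + 1 = aD + 1 := by omega
          rw [n1, show ((aD + 1 : ℕ) : ℝ) = (aD:ℝ) + 1 by push_cast; ring,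
            show bD - by' = bD - k by rw [hbk], Nat.cast_sub hble']
          have h1 := g_add_le k h m hk (x := (aD:ℝ) + 1) (y := (aD:ℝ)) (by linarith)
          have hk1 : (1:ℝ) ≤ k := by exact_mod_cast hk
          linarith
        · have h1 : g k h m ((aD - ay + 1 : ℕ) : ℝ) ≤ g k h m (aD : ℝ) := by
            apply g_mono k h m hk
            have : aD - ay + 1 ≤ aD := by omega
            exact_mod_cast this
          have : ((bD - by' : ℕ):ℝ) ≤ (bD:ℝ) := by exact_mod_cast Nat.sub_le _ _
          linarith
      · have e1 : (insert u (D \ Y)).filter (fun p => (p.1 : ℕ) = 0)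
            = (D \ Y).filter (fun p => (p.1 : ℕ) = 0) := by
          rw [Finset.filter_insert, if_neg hu]
        have e2 : (insert u (D \ Y)).filter (fun p => (p.1 : ℕ) ≠ 0)
            = insert u ((D \ Y).filter (fun p => (p.1 : ℕ) ≠ 0)) := by
          rw [Finset.filter_insert, if_pos hu]
        have e2c : ((insert u (D \ Y)).filter (fun p => (p.1 : ℕ) ≠ 0)).card
            = (bD - by') + 1 := by
          rw [e2, Finset.card_insert_of_notMem (fun hx => huDY (Finset.filter_subset _ _ hx)), hc2]
        unfold Sigma'
        rw [e2c, e1, hc1]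
        -- goal: g (aD - ay) + (bD - by' + 1) ≤ g aD + bD
        by_cases hby0 : by' = 0
        · have hak : ay = k := by omega
          have hale' : k ≤ aD := hak ▸ hale
          have hK0 : (0:ℝ) < k := by exact_mod_cast hk
          have n1 : bD - by' + 1 = bD + 1 := by omega
          rw [n1, show ((bD + 1 : ℕ) : ℝ) = (bD:ℝ) + 1 by push_cast; ring,
            show aD - ay = aD - k by rw [hak], Nat.cast_sub hale']
          have h1 := g_div_le k h m hk (x := (aD:ℝ)) (y := (aD:ℝ) - k) (by linarith)
          have e : ((aD:ℝ) - ((aD:ℝ) - k))/k = 1 := by field_simp; ring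
          rw [e] at h1
          linarith
        · have h1 : g k h m ((aD - ay : ℕ) : ℝ) ≤ g k h m (aD : ℝ) := by
            apply g_mono k h m hk; exact_mod_cast Nat.sub_le _ _
          have h2 : ((bD - by' : ℕ):ℝ) + 1 ≤ (bD:ℝ) := by
            rw [Nat.cast_sub hble]
            have : (1:ℝ) ≤ by' := by exact_mod_cast Nat.one_le_iff_ne_zero.mpr hby0
            linarith
          push_cast
          push_cast at h2
          linarith
    exact le_trans hmain hD
end

section
/- In the independence system M(k,h,m), if C ⊆ D are independent, u ∉ D with C ∪ {u} independent, and |D \ C| ≥ k, then for any subset Y ⊆ D \ C of size exactly k, the set (D \ Y) ∪ {u} is independent. -/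
lemma gaux_mono (t kr : ℝ) (hk : 0 < kr) {x y : ℝ} (hxy : x ≤ y) :
    min x t + max ((x - t)/kr) 0 ≤ min y t + max ((y - t)/kr) 0 := by
  gcongr

lemma gaux_step (t kr : ℝ) (hk : 1 ≤ kr) (ht : 0 ≤ t) (x : ℝ) :
    min (x+1) t + max ((x+1-t)/kr) 0 ≤ min x t + max ((x-t)/kr) 0 + 1 := by
  have hk0 : (0:ℝ) < kr := by linarith
  rcases le_total (x+1) t with h | h
  · rw [min_eq_left h, min_eq_left (by linarith),
      max_eq_right (by apply div_nonpos_of_nonpos_of_nonneg <;> linarith),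
      max_eq_right (by apply div_nonpos_of_nonpos_of_nonneg <;> linarith)]
    linarith
  · rcases le_total t x with h2 | h2
    · rw [min_eq_right h2, min_eq_right (by linarith),
        max_eq_left (div_nonneg (by linarith) hk0.le),
        max_eq_left (div_nonneg (by linarith) hk0.le)]
      have e : (x+1-t)/kr = (x-t)/kr + 1/kr := by field_simp; ring
      have h1 : 1/kr ≤ 1 := by rw [div_le_one hk0]; exact hk
      linarith
    · rw [min_eq_right h, max_eq_left (div_nonneg (by linarith) hk0.le),
        min_eq_left h2,
        max_eq_right (by apply div_nonpos_of_nonpos_of_nonneg <;> linarith)]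
      have : (x+1-t)/kr ≤ x+1-t := div_le_self (by linarith) hk
      linarith

lemma gaux_drop (t kr : ℝ) (hk : 1 ≤ kr) (ht : 0 ≤ t) {x : ℝ} (hx : kr ≤ x) :
    min (x - kr) t + max ((x - kr - t)/kr) 0 + 1 ≤ min x t + max ((x - t)/kr) 0 := by
  have hk0 : (0:ℝ) < kr := by linarith
  rcases le_total x t with h | h
  · rw [min_eq_left (by linarith : x - kr ≤ t),
      max_eq_right (by apply div_nonpos_of_nonpos_of_nonneg <;> linarith),
      min_eq_left h]
    have : (0:ℝ) ≤ max ((x-t)/kr) 0 := le_max_right _ _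
    linarith
  · rcases le_total t (x - kr) with h2 | h2
    · rw [min_eq_right h2, max_eq_left (div_nonneg (by linarith) hk0.le),
        min_eq_right h, max_eq_left (div_nonneg (by linarith) hk0.le)]
      have e : (x-t)/kr = (x-kr-t)/kr + 1 := by field_simp; ring
      linarith
    · rw [min_eq_left h2,
        max_eq_right (by apply div_nonpos_of_nonpos_of_nonneg <;> linarith),
        min_eq_right h, max_eq_left (div_nonneg (by linarith) hk0.le)]
      have e : (x-t)/kr * kr = x - t := div_mul_cancel₀ _ hk0.ne'
      nlinarith [mul_nonneg (sub_nonneg.2 hk) (sub_nonneg.2 h2), e, hk0,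
        div_nonneg (sub_nonneg.2 h) hk0.le]

/-- If `C ⊆ D` are independent, `u ∉ D`, `C + u` is independent and `|D \ C| ≥ k`,
then removing any `Y ⊆ D \ C` of size exactly `k` makes `D \ Y + u` independent. -/
theorem M_remove_k_swap (k h m : ℕ) (hk : 0 < k) (hh : 0 < h) (hm : 0 < m)
    (hdiv : 2 * k ∣ h) (C D : Finset (Elem k h m)) (u : Elem k h m)
    (hCD : C ⊆ D) (hC : Indep k h m C) (hD : Indep k h m D) (hu : u ∉ D)
    (hCu : Indep k h m (insert u C)) (hbig : k ≤ (D \ C).card)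
    (Y : Finset (Elem k h m)) (hY : Y ⊆ D \ C) (hYcard : Y.card = k) :
    Indep k h m (insert u (D \ Y)) := by
  classical
  have hk1 : (1:ℝ) ≤ (k:ℝ) := by exact_mod_cast hk
  have hk0 : (0:ℝ) < (k:ℝ) := by linarith
  have ht0 : (0:ℝ) ≤ 2 * (k:ℝ) * m / h := by positivity
  have gmono : ∀ {x y : ℝ}, x ≤ y → g k h m x ≤ g k h m y := fun hxy =>
    gaux_mono _ _ hk0 hxy
  have gstep : ∀ x : ℝ, g k h m (x+1) ≤ g k h m x + 1 := fun x =>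
    gaux_step _ _ hk1 ht0 x
  have gdrop : ∀ {x : ℝ}, (k:ℝ) ≤ x → g k h m (x - k) + 1 ≤ g k h m x := fun hx =>
    gaux_drop _ _ hk1 ht0 hx
  have hYD : Y ⊆ D := hY.trans (Finset.sdiff_subset)
  have huDY : u ∉ D \ Y := fun hmem => hu (Finset.sdiff_subset hmem)
  set q0 : Elem k h m → Prop := fun p => (p.1 : ℕ) = 0 with hq0
  set q1 : Elem k h m → Prop := fun p => (p.1 : ℕ) ≠ 0 with hq1
  have f0sub : Y.filter q0 ⊆ D.filter q0 := Finset.filter_subset_filter _ hYD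
  have f1sub : Y.filter q1 ⊆ D.filter q1 := Finset.filter_subset_filter _ hYD
  have e0 : (D \ Y).filter q0 = D.filter q0 \ Y.filter q0 := by
    ext a; simp only [Finset.mem_filter, Finset.mem_sdiff]; tauto
  have e1 : (D \ Y).filter q1 = D.filter q1 \ Y.filter q1 := by
    ext a; simp only [Finset.mem_filter, Finset.mem_sdiff]; tauto
  have eY : Y.filter q1 = Y \ Y.filter q0 := by
    ext a; simp only [hq0, hq1, Finset.mem_filter, Finset.mem_sdiff, ne_eq]; tauto
  set d0 := (D.filter q0).card with hd0
  set d1 := (D.filter q1).card with hd1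
  set y0 := (Y.filter q0).card with hy0d
  set y1 := (Y.filter q1).card with hy1d
  have c0 : ((D \ Y).filter q0).card = d0 - y0 := by
    rw [e0, Finset.card_sdiff_of_subset f0sub]
  have c1 : ((D \ Y).filter q1).card = d1 - y1 := by
    rw [e1, Finset.card_sdiff_of_subset f1sub]
  have y0le : y0 ≤ d0 := Finset.card_le_card f0sub
  have y1le : y1 ≤ d1 := Finset.card_le_card f1sub
  have ysum : y0 + y1 = k := by
    have h1 : y1 = Y.card - y0 := by
      rw [hy1d, eY, Finset.card_sdiff_of_subset (Finset.filter_subset _ _)]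
    have h2 : y0 ≤ Y.card := Finset.card_le_card (Finset.filter_subset _ _)
    omega
  have rc0 : (((D \ Y).filter q0).card : ℝ) = (d0 : ℝ) - (y0 : ℝ) := by
    rw [c0]; exact Nat.cast_sub y0le
  have rc1 : (((D \ Y).filter q1).card : ℝ) = (d1 : ℝ) - (y1 : ℝ) := by
    rw [c1]; exact Nat.cast_sub y1le
  have hDm : g k h m (d0 : ℝ) + (d1 : ℝ) ≤ (m : ℝ) := hD
  have y0le' : (y0 : ℝ) ≤ (d0 : ℝ) := by exact_mod_cast y0le
  have y1le' : (y1 : ℝ) ≤ (d1 : ℝ) := by exact_mod_cast y1le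
  have y0nn : (0:ℝ) ≤ (y0 : ℝ) := by positivity
  have y1nn : (0:ℝ) ≤ (y1 : ℝ) := by positivity
  have ysum' : (y0 : ℝ) + (y1 : ℝ) = (k:ℝ) := by exact_mod_cast ysum
  unfold Indep Sigma'
  by_cases hu0 : (u.1 : ℕ) = 0
  · have hf0 : (insert u (D \ Y)).filter q0 = insert u ((D \ Y).filter q0) := by
      rw [Finset.filter_insert, if_pos hu0]
    have hf1 : (insert u (D \ Y)).filter q1 = (D \ Y).filter q1 := by
      rw [Finset.filter_insert, if_neg (by simp [hq1, hu0])]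
    have hnm : u ∉ (D \ Y).filter q0 := fun hmem => huDY (Finset.filter_subset _ _ hmem)
    have card0 : (((insert u (D \ Y)).filter q0).card : ℝ) = (d0 : ℝ) - (y0 : ℝ) + 1 := by
      rw [hf0, Finset.card_insert_of_notMem hnm]
      push_cast
      rw [rc0]
    have card1 : (((insert u (D \ Y)).filter q1).card : ℝ) = (d1 : ℝ) - (y1 : ℝ) := by
      rw [hf1]; exact rc1
    rw [card0, card1]
    by_cases hy0 : y0 = 0
    · have hY0 : (y0 : ℝ) = 0 := by simp [hy0]
      have hY1 : (y1 : ℝ) = (k:ℝ) := by rw [← ysum', hY0]; ring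
      have := gstep (d0 : ℝ)
      rw [hY0, hY1, sub_zero]
      linarith
    · have hY0 : (1:ℝ) ≤ (y0 : ℝ) := by exact_mod_cast Nat.one_le_iff_ne_zero.2 hy0
      have := gmono (show (d0:ℝ) - y0 + 1 ≤ (d0:ℝ) by linarith)
      linarith
  · have hf0 : (insert u (D \ Y)).filter q0 = (D \ Y).filter q0 := by
      rw [Finset.filter_insert, if_neg hu0]
    have hf1 : (insert u (D \ Y)).filter q1 = insert u ((D \ Y).filter q1) := by
      rw [Finset.filter_insert, if_pos hu0]
    have hnm : u ∉ (D \ Y).filter q1 := fun hmem => huDY (Finset.filter_subset _ _ hmem)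
    have card0 : (((insert u (D \ Y)).filter q0).card : ℝ) = (d0 : ℝ) - (y0 : ℝ) := by
      rw [hf0]; exact rc0
    have card1 : (((insert u (D \ Y)).filter q1).card : ℝ) = (d1 : ℝ) - (y1 : ℝ) + 1 := by
      rw [hf1, Finset.card_insert_of_notMem hnm]
      push_cast
      rw [rc1]
    rw [card0, card1]
    by_cases hy1 : y1 = 0
    · have hY1 : (y1 : ℝ) = 0 := by simp [hy1]
      have hY0 : (y0 : ℝ) = (k:ℝ) := by rw [← ysum', hY1]; ring
      have hkD0 : (k:ℝ) ≤ (d0 : ℝ) := by rw [← hY0]; exact y0le'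
      have := gdrop hkD0
      rw [hY0, hY1]
      linarith
    · have hY1 : (1:ℝ) ≤ (y1 : ℝ) := by exact_mod_cast Nat.one_le_iff_ne_zero.2 hy1
      have := gmono (show (d0:ℝ) - y0 ≤ (d0:ℝ) by linarith)
      linarith
end

section
/- The independence system M(k,h,m) contains an independent set of size at least mk(1 - 2k/h), all of whose elements lie in H_1. -/
/-- `M(k,h,m)` contains an independent set of size at least `mk(1 - 2k/h)` whose
elements all lie in `H_1`. -/
theorem exists_large_independent (k h m : ℕ) (hk : 0 < k) (hh : 0 < h) (hm : 0 < m)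
    (hdiv : 2 * k ∣ h) (h2k : 2 * k ≤ h) (hint : h ∣ 2 * k * m) :
    ∃ S : Finset (Elem k h m), (∀ p ∈ S, (p.1 : ℕ) = 0) ∧ Indep k h m S ∧
      (m : ℝ) * k * (1 - 2 * k / h) ≤ S.card := by
  -- c = 2km/h (exact), a = km - kc
  set c : ℕ := 2 * k * m / h with hc
  have hhc : h * c = 2 * k * m := Nat.mul_div_cancel' hint
  have hcm : c ≤ m := by
    have : h * c ≤ h * m := by
      rw [hhc]; exact Nat.mul_le_mul_right m h2k
    exact Nat.le_of_mul_le_mul_left this hh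
  set a : ℕ := k * m - k * c with ha
  have hale : a ≤ k * m := Nat.sub_le _ _
  have hltkm : ∀ i ∈ Finset.range a, i < k * m := fun i hi =>
    lt_of_lt_of_le (Finset.mem_range.mp hi) hale
  set S : Finset (Elem k h m) :=
    ((Finset.range a).attachFin hltkm).image (fun i => ((⟨0, hh⟩ : Fin h), i)) with hS
  have hinj : Function.Injective (fun i : Fin (k * m) => ((⟨0, hh⟩ : Fin h), i)) := by
    intro x y hxy; simpa using hxy
  have hcard : S.card = a := by
    rw [hS, Finset.card_image_of_injective _ hinj, Finset.card_attachFin,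
      Finset.card_range]
  have hmem : ∀ p ∈ S, (p.1 : ℕ) = 0 := by
    intro p hp
    rw [hS, Finset.mem_image] at hp
    obtain ⟨i, _, rfl⟩ := hp
    rfl
  have hfilter1 : S.filter (fun p => (p.1 : ℕ) = 0) = S :=
    Finset.filter_true_of_mem hmem
  have hfilter2 : S.filter (fun p => (p.1 : ℕ) ≠ 0) = ∅ := by
    apply Finset.filter_false_of_mem
    intro p hp
    simp [hmem p hp]
  -- real facts
  have hhR : (0:ℝ) < h := by exact_mod_cast hh
  have hkR : (0:ℝ) < k := by exact_mod_cast hk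
  have hhcR : (h:ℝ) * c = 2 * k * m := by exact_mod_cast hhc
  have hcR : (c : ℝ) = 2 * k * m / h := by
    field_simp; linarith
  have haR : (a : ℝ) = k * m - k * c := by
    have : k * c ≤ k * m := Nat.mul_le_mul_left k hcm
    push_cast [ha, Nat.cast_sub this]
    ring
  refine ⟨S, hmem, ?_, ?_⟩
  · unfold Indep Sigma' g
    rw [hfilter1, hfilter2, hcard]
    simp only [Finset.card_empty, Nat.cast_zero, add_zero]
    rw [haR, ← hcR]
    rcases le_total ((k:ℝ) * m - k * c) c with hle | hle
    · rw [min_eq_left hle, max_eq_right (by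
        apply div_nonpos_of_nonpos_of_nonneg <;> [linarith; positivity])]
      have : (c:ℝ) ≤ m := by exact_mod_cast hcm
      linarith
    · rw [min_eq_right hle, max_eq_left (by apply div_nonneg <;> linarith)]
      have hck : (0:ℝ) ≤ (c:ℝ) / k := by positivity
      rw [sub_div, sub_div]
      have h1 : ((k:ℝ) * m) / k = m := by field_simp
      have h2 : ((k:ℝ) * c) / k = c := by field_simp
      rw [h1, h2]
      linarith
  · rw [hcard, haR, hcR]
    field_simp
    ring_nf
    exact le_refl _
end

section
/- The ratio between the maximum size of an independent set in M(k,h,m) and in M'(k,h,m) is at least k(1 - 2k/h), where M'(k,h,m) is the uniform matroid of rank m on the same ground set. -/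
/-- `S` is independent in the uniform matroid `M'(k,h,m)` iff `|S| ≤ m`. -/
def Indep' (k h m : ℕ) (S : Finset (Elem k h m)) : Prop := S.card ≤ m

/-- The ratio between the maximum size of an independent set in `M(k,h,m)` and in
`M'(k,h,m)` is at least `k(1 - 2k/h)`. -/
theorem ratio_lower_bound (k h m : ℕ) (hk : 0 < k) (hh : 0 < h) (hm : 0 < m)
    (hdiv : 2 * k ∣ h) (h2k : 2 * k ≤ h) (hint : h ∣ 2 * k * m) :
    ∃ S : Finset (Elem k h m), Indep k h m S ∧
      ∀ T : Finset (Elem k h m), Indep' k h m T →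
        (k : ℝ) * (1 - 2 * k / h) * T.card ≤ S.card := by
  set c' : ℕ := 2 * k * m / h with hc'
  have hcm : h * c' = 2 * k * m := Nat.mul_div_cancel' hint
  have hc'le : c' ≤ m := by
    have : h * c' ≤ h * m := by
      rw [hcm]; exact Nat.mul_le_mul h2k le_rfl
    exact Nat.le_of_mul_le_mul_left this hh
  set x : ℕ := k * (m - c') with hx
  have hxle : x ≤ k * m := Nat.mul_le_mul_left k (Nat.sub_le _ _)
  set J : Finset (Fin (k * m)) :=
    (Finset.range x).attachFin (fun i hi => lt_of_lt_of_le (Finset.mem_range.mp hi) hxle)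
    with hJ
  set S : Finset (Elem k h m) := ({(⟨0, hh⟩ : Fin h)} : Finset (Fin h)) ×ˢ J with hS
  have hScard : S.card = x := by
    rw [hS, Finset.card_product, Finset.card_singleton, hJ, Finset.card_attachFin,
      Finset.card_range, one_mul]
  have hmem : ∀ p ∈ S, (p.1 : ℕ) = 0 := by
    intro p hp
    rw [hS, Finset.mem_product, Finset.mem_singleton] at hp
    rw [hp.1]
  have hfilter1 : S.filter (fun p => (p.1 : ℕ) = 0) = S :=
    Finset.filter_true_of_mem hmem
  have hfilter2 : S.filter (fun p => (p.1 : ℕ) ≠ 0) = ∅ :=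
    Finset.filter_false_of_mem (fun p hp => by simp [hmem p hp])
  have hhr : (0:ℝ) < h := by exact_mod_cast hh
  have hkr : (0:ℝ) < k := by exact_mod_cast hk
  have hcr : (c' : ℝ) = 2 * k * m / h := by
    have : (h : ℝ) * c' = 2 * k * m := by exact_mod_cast hcm
    field_simp
    linarith [this]
  have hxr : (x : ℝ) = k * m - k * c' := by
    rw [hx]
    push_cast [Nat.sub_add_cancel, hc'le]
    ring
  refine ⟨S, ?_, ?_⟩
  · unfold Indep Sigma' g
    rw [hfilter1, hfilter2, hScard]
    simp only [Finset.card_empty, Nat.cast_zero, add_zero]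
    rcases le_total (x : ℝ) (2 * k * m / h) with hle | hle
    · rw [min_eq_left hle, max_eq_right (by apply div_nonpos_of_nonpos_of_nonneg <;> linarith)]
      rw [← hcr] at hle
      have hcm' : (c' : ℝ) ≤ m := by exact_mod_cast hc'le
      linarith
    · rw [min_eq_right hle, max_eq_left (div_nonneg (by linarith) hkr.le)]
      rw [← hcr] at hle ⊢
      have hc0 : (0:ℝ) ≤ c' := Nat.cast_nonneg _
      have : ((x:ℝ) - c') / k ≤ (m : ℝ) - c' := by
        rw [div_le_iff₀ hkr]
        nlinarith [hxr]
      linarith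
  · intro T hT
    have hT' : (T.card : ℝ) ≤ m := by exact_mod_cast hT
    have hcoef : (0:ℝ) ≤ (k : ℝ) * (1 - 2 * k / h) := by
      have : 2 * (k:ℝ) ≤ h := by exact_mod_cast h2k
      have : 2 * (k:ℝ) / h ≤ 1 := by rw [div_le_one hhr]; linarith
      nlinarith
    have step : (k : ℝ) * (1 - 2 * k / h) * T.card ≤ (k : ℝ) * (1 - 2 * k / h) * m :=
      mul_le_mul_of_nonneg_left hT' hcoef
    rw [hScard, hxr, hcr]
    calc (k : ℝ) * (1 - 2 * k / h) * T.card ≤ (k : ℝ) * (1 - 2 * k / h) * m := step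
      _ = k * m - k * (2 * k * m / h) := by ring
end

section
/- If S is a uniformly random subset of size s of the ground set N, where m < s ≤ km, then the probability that S is independent in M(k,h,m) but not in M'(k,h,m), or vice versa, is at most exp(-2km/h²). -/
open scoped Classical

open Finset in
lemma card_filter_superset {α : Type*} [Fintype α] [DecidableEq α] (A : Finset α) (s : ℕ)
    (hA : A.card ≤ s) :
    ((Finset.univ.powersetCard s).filter (fun S => A ⊆ S)).card
      = (Fintype.card α - A.card).choose (s - A.card) := by
  classical
  have key : ((Finset.univ.powersetCard s).filter (fun S => A ⊆ S)).card
      = ((Finset.univ \ A).powersetCard (s - A.card)).card := by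
    apply Finset.card_bij' (fun S _ => S \ A) (fun B _ => B ∪ A)
    · intro S hS
      simp only [Finset.mem_filter, Finset.mem_powersetCard] at hS
      obtain ⟨⟨_, hcard⟩, hAS⟩ := hS
      rw [Finset.mem_powersetCard]
      exact ⟨Finset.sdiff_subset_sdiff (Finset.subset_univ S) le_rfl,
        by rw [Finset.card_sdiff_of_subset hAS, hcard]⟩
    · intro B hB
      rw [Finset.mem_powersetCard] at hB
      obtain ⟨hBsub, hBcard⟩ := hB
      have hdisj : Disjoint B A := Finset.disjoint_of_subset_left hBsub Finset.sdiff_disjoint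
      simp only [Finset.mem_filter, Finset.mem_powersetCard]
      refine ⟨⟨Finset.subset_univ _, ?_⟩, Finset.subset_union_right⟩
      rw [Finset.card_union_of_disjoint hdisj, hBcard]
      omega
    · intro S hS
      simp only [Finset.mem_filter, Finset.mem_powersetCard] at hS
      exact Finset.sdiff_union_of_subset hS.2
    · intro B hB
      rw [Finset.mem_powersetCard] at hB
      exact Finset.union_sdiff_cancel_right
        (Finset.disjoint_of_subset_left hB.1 Finset.sdiff_disjoint)
  rw [key, Finset.card_powersetCard, Finset.card_sdiff_of_subset (Finset.subset_univ A), Finset.card_univ]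

lemma choose_ratio (a K N : ℕ) (haK : a ≤ K) (hKN : K ≤ N) :
    K.choose a * N ^ a ≤ N.choose a * K ^ a := by
  induction a with
  | zero => simp
  | succ n ih =>
    have hn : n ≤ K := Nat.le_of_succ_le haK
    have ih' := ih (Nat.le_of_succ_le haK)
    have hKrec := Nat.choose_succ_right_eq K n
    have hNrec := Nat.choose_succ_right_eq N n
    have hfac : (K - n) * N ≤ (N - n) * K := by
      have h1 : n * K ≤ n * N := Nat.mul_le_mul_left n hKN
      have h2 : n * N ≤ K * N := Nat.mul_le_mul_right N hn
      have h3 : K * N = N * K := Nat.mul_comm K N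
      rw [Nat.sub_mul, Nat.sub_mul]
      omega
    have main : (n+1) * (K.choose (n+1) * N ^ (n+1)) ≤ (n+1) * (N.choose (n+1) * K ^ (n+1)) := by
      calc (n+1) * (K.choose (n+1) * N ^ (n+1))
          = (K.choose (n+1) * (n+1)) * (N * N ^ n) := by ring
        _ = (K.choose n * (K - n)) * (N * N ^ n) := by rw [hKrec]
        _ = (K.choose n * N ^ n) * ((K - n) * N) := by ring
        _ ≤ (N.choose n * K ^ n) * ((N - n) * K) := Nat.mul_le_mul ih' hfac
        _ = (N.choose n * (N - n)) * (K * K ^ n) := by ring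
        _ = (N.choose (n+1) * (n+1)) * (K * K ^ n) := by rw [hNrec]
        _ = (n+1) * (N.choose (n+1) * K ^ (n+1)) := by ring
    exact Nat.le_of_mul_le_mul_left main (Nat.succ_pos n)

lemma exp_54_le : Real.exp (5/4) ≤ 3.5 := by
  have h4 : Real.exp (5/4) ^ 4 = Real.exp 1 ^ 5 := by
    rw [← Real.exp_nat_mul, ← Real.exp_nat_mul]; norm_num
  have h5 : Real.exp 1 ^ 5 ≤ 2.7182818286 ^ 5 :=
    pow_le_pow_left₀ (Real.exp_pos 1).le Real.exp_one_lt_d9.le 5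
  have : Real.exp (5/4) ^ 4 ≤ 3.5 ^ 4 := by
    rw [h4]; refine h5.trans (by norm_num)
  exact le_of_pow_le_pow_left₀ (by norm_num) (by norm_num) this


set_option maxHeartbeats 2000000 in
/-- For a uniformly random subset `S` of size `s` of the ground set, with
`m < s ≤ km`, the probability that `S` is independent in exactly one of
`M(k,h,m)` and `M'(k,h,m)` is at most `exp(-2km/h²)`. -/
theorem prob_distinguish_le (k h m s : ℕ) (hk : 0 < k) (hh : 0 < h) (hm : 0 < m)
    (hdiv : 2 * k ∣ h) (hlo : m < s) (hhi : s ≤ k * m) :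
    (((Finset.univ.powersetCard s :
          Finset (Finset (Elem k h m))).filter
        (fun S => (Indep k h m S ∧ ¬ Indep' k h m S) ∨
                  (Indep' k h m S ∧ ¬ Indep k h m S))).card : ℝ) /
        ((Finset.univ.powersetCard s : Finset (Finset (Elem k h m))).card : ℝ)
      ≤ Real.exp (-(2 * k * m) / h ^ 2) := by
  classical
  set E := ((Finset.univ.powersetCard s : Finset (Finset (Elem k h m))).filter
        (fun S => (Indep k h m S ∧ ¬ Indep' k h m S) ∨
                  (Indep' k h m S ∧ ¬ Indep k h m S))) with hE
  have hhk : 2 * k ≤ h := Nat.le_of_dvd hh hdiv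
  have hposh : (0:ℝ) < h := by positivity
  have hposk : (0:ℝ) < k := by positivity
  have hposm : (0:ℝ) < m := by positivity
  set c : ℝ := 2 * k * m / h with hc
  have hcpos : 0 < c := by positivity
  have hms : (m:ℝ) < s := by exact_mod_cast hlo
  -- analysis of independent sets
  have hana : ∀ S ∈ E, c < ((S.filter (fun p : Elem k h m => (p.1 : ℕ) = 0)).card : ℝ) ∧
      c + (((S.filter (fun p : Elem k h m => (p.1 : ℕ) = 0)).card : ℝ) - c) / k +
        ((s:ℝ) - ((S.filter (fun p : Elem k h m => (p.1 : ℕ) = 0)).card : ℝ)) ≤ m := by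
    intro S hS
    rw [hE, Finset.mem_filter, Finset.mem_powersetCard] at hS
    obtain ⟨⟨-, hcard⟩, hcond⟩ := hS
    have hnI' : ¬ Indep' k h m S := by
      simp only [Indep', hcard]; omega
    have hI : Indep k h m S := by tauto
    set x : ℕ := (S.filter (fun p : Elem k h m => (p.1 : ℕ) = 0)).card with hx
    have hxy : x + (S.filter (fun p : Elem k h m => ¬((p.1 : ℕ) = 0))).card = s := by
      rw [hx, Finset.card_filter_add_card_filter_not, hcard]
    have hSig : min (x:ℝ) c + max (((x:ℝ) - c) / k) 0
        + ((S.filter (fun p : Elem k h m => ¬((p.1 : ℕ) = 0))).card : ℝ) ≤ m := by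
      have := hI
      unfold Indep Sigma' g at this
      convert this using 3 <;> norm_num [hc]
    have hyx : ((S.filter (fun p : Elem k h m => ¬((p.1 : ℕ) = 0))).card : ℝ) = (s:ℝ) - x := by
      have : ((x:ℕ):ℝ) + ((S.filter (fun p : Elem k h m => ¬((p.1 : ℕ) = 0))).card : ℝ) = s := by
        exact_mod_cast congrArg (Nat.cast : ℕ → ℝ) hxy
      linarith
    rw [hyx] at hSig
    have hcx : c < (x:ℝ) := by
      by_contra hcon
      push_neg at hcon
      have h1 : min (x:ℝ) c = x := min_eq_left hcon
      have h2 : (0:ℝ) ≤ max (((x:ℝ) - c) / k) 0 := le_max_right _ _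
      nlinarith
    refine ⟨hcx, ?_⟩
    have h1 : min (x:ℝ) c = c := min_eq_right hcx.le
    have h2 : max (((x:ℝ) - c) / k) 0 = ((x:ℝ) - c) / k :=
      max_eq_left (div_nonneg (by linarith) hposk.le)
    nlinarith [hSig, h1, h2]
  rcases Nat.lt_or_ge k 2 with hk1 | hk2
  · -- k = 1 : E is empty
    have hk1' : (k:ℝ) = 1 := by
      have : k = 1 := by omega
      simp [this]
    have hEemp : E = ∅ := by
      rw [Finset.eq_empty_iff_forall_notMem]
      intro S hS
      obtain ⟨hcx, hineq⟩ := hana S hS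
      rw [hk1'] at hineq
      simp only [div_one] at hineq
      linarith
    rw [hEemp]
    simp only [Finset.card_empty, Nat.cast_zero, zero_div]
    positivity
  -- main case : 2 ≤ k
  have hh4 : 4 ≤ h := le_trans (by omega) hhk
  have hk2' : (2:ℝ) ≤ k := by exact_mod_cast hk2
  have hh4' : (4:ℝ) ≤ h := by exact_mod_cast hh4
  have hkm1 : (0:ℝ) < (k:ℝ) - 1 := by linarith
  set bound : ℝ := c + k * ((s:ℝ) - m) / ((k:ℝ) - 1) with hbound
  set a : ℕ := ⌈bound⌉₊ with ha
  have hcb : c ≤ bound := by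
    have : 0 ≤ (k:ℝ) * ((s:ℝ) - m) / ((k:ℝ) - 1) := by
      apply div_nonneg _ hkm1.le
      nlinarith
    rw [hbound]
    exact le_add_of_nonneg_right this
  have hba : bound ≤ a := Nat.le_ceil bound
  have hapos : 0 < a := by
    rw [ha]; exact Nat.ceil_pos.mpr (lt_of_lt_of_le hcpos hcb)
  have hapos' : (0:ℝ) < a := by exact_mod_cast hapos
  have hax : ∀ S ∈ E, a ≤ (S.filter (fun p : Elem k h m => (p.1 : ℕ) = 0)).card := by
    intro S hS
    obtain ⟨hcx, hineq⟩ := hana S hS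
    set x : ℕ := (S.filter (fun p : Elem k h m => (p.1 : ℕ) = 0)).card with hx
    rw [ha, Nat.ceil_le]
    have hxk : (k:ℝ) * (((x:ℝ) - c) / k) = (x:ℝ) - c :=
      mul_div_cancel₀ _ (ne_of_gt hposk)
    have hmul := mul_le_mul_of_nonneg_left hineq hposk.le
    have hgoal : (k:ℝ) * ((s:ℝ) - m) ≤ ((x:ℝ) - c) * ((k:ℝ) - 1) := by nlinarith
    have := (div_le_iff₀ hkm1).mpr hgoal
    rw [hbound]
    linarith
  -- if a > s then E is empty and we are done
  by_cases has : a ≤ s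
  swap
  · have hEemp : E = ∅ := by
      rw [Finset.eq_empty_iff_forall_notMem]
      intro S hS
      have h1 := hax S hS
      have h2 : (S.filter (fun p : Elem k h m => (p.1 : ℕ) = 0)).card ≤ S.card :=
        Finset.card_filter_le _ _
      have hcard : S.card = s :=
        (Finset.mem_powersetCard.1 (Finset.mem_filter.1 hS).1).2
      omega
    rw [hEemp]
    simp only [Finset.card_empty, Nat.cast_zero, zero_div]
    positivity
  -- counting
  set H₁ : Finset (Elem k h m) :=
    Finset.univ.filter (fun p : Elem k h m => (p.1 : ℕ) = 0) with hH₁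
  have hH₁card : H₁.card = k * m := by
    have heq : H₁ = ({(⟨0, hh⟩ : Fin h)} : Finset (Fin h)) ×ˢ
        (Finset.univ : Finset (Fin (k * m))) := by
      ext ⟨i, j⟩
      simp [hH₁, Finset.mem_product, Fin.ext_iff, eq_comm]
    rw [heq, Finset.card_product, Finset.card_singleton, Finset.card_univ,
      Fintype.card_fin, one_mul]
  set Nc := h * (k * m) with hNc
  have hcardU : Fintype.card (Elem k h m) = Nc := by
    simp [hNc]
  have hcount : E.card ≤ (k * m).choose a * (Nc - a).choose (s - a) := by
    have hsubE : E ⊆ (H₁.powersetCard a).biUnion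
        (fun A => (Finset.univ.powersetCard s).filter (fun S => A ⊆ S)) := by
      intro S hS
      have haxS := hax S hS
      obtain ⟨A, hAsub, hAcard⟩ := Finset.exists_subset_card_eq haxS
      rw [Finset.mem_biUnion]
      refine ⟨A, ?_, ?_⟩
      · rw [Finset.mem_powersetCard]
        exact ⟨hAsub.trans (Finset.filter_subset_filter _ (Finset.subset_univ S)), hAcard⟩
      · rw [Finset.mem_filter]
        exact ⟨(Finset.mem_filter.1 hS).1, hAsub.trans (Finset.filter_subset _ S)⟩
    calc E.card ≤ _ := Finset.card_le_card hsubE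
      _ ≤ ∑ A ∈ H₁.powersetCard a,
            ((Finset.univ.powersetCard s).filter (fun S => A ⊆ S)).card :=
          Finset.card_biUnion_le
      _ = ∑ A ∈ H₁.powersetCard a, (Nc - a).choose (s - a) := by
          refine Finset.sum_congr rfl fun A hA => ?_
          rw [Finset.mem_powersetCard] at hA
          rw [card_filter_superset A s (hA.2 ▸ has), hA.2, hcardU]
      _ = (k * m).choose a * (Nc - a).choose (s - a) := by
          rw [Finset.sum_const, Finset.card_powersetCard, hH₁card, smul_eq_mul]
  -- set up the real chain
  have hKa : a ≤ k * m := has.trans hhi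
  have hKN : k * m ≤ Nc := Nat.le_mul_of_pos_left (k * m) hh
  have hsN : s ≤ Nc := hhi.trans hKN
  have hTeq : ((Finset.univ.powersetCard s : Finset (Finset (Elem k h m)))).card
      = Nc.choose s := by
    rw [Finset.card_powersetCard, Finset.card_univ, hcardU]
  rw [hTeq]
  have hTpos : (0:ℝ) < (Nc.choose s : ℝ) := by
    exact_mod_cast Nat.choose_pos hsN
  rw [div_le_iff₀ hTpos]
  have hkmpos : 0 < k * m := Nat.mul_pos hk hm
  have hkmpos' : (0:ℝ) < ((k*m : ℕ):ℝ) := by exact_mod_cast hkmpos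
  -- choose ratio in ℝ
  have hB : ((k*m).choose a : ℝ) * (h:ℝ)^a ≤ (Nc.choose a : ℝ) := by
    have hrat := choose_ratio a (k*m) Nc hKa hKN
    have hrat' : ((k*m).choose a : ℝ) * ((Nc:ℝ))^a ≤ (Nc.choose a : ℝ) * (((k*m:ℕ)):ℝ)^a := by
      exact_mod_cast hrat
    have hNpow : ((Nc:ℝ)) = (h:ℝ) * (((k*m:ℕ)):ℝ) := by
      rw [hNc]; push_cast; ring
    have hpowpos : (0:ℝ) < (((k*m:ℕ)):ℝ)^a := pow_pos hkmpos' a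
    apply le_of_mul_le_mul_right _ hpowpos
    calc ((k*m).choose a : ℝ) * (h:ℝ)^a * (((k*m:ℕ)):ℝ)^a
        = ((k*m).choose a : ℝ) * ((h:ℝ) * (((k*m:ℕ)):ℝ))^a := by rw [mul_pow]; ring
      _ = ((k*m).choose a : ℝ) * ((Nc:ℝ))^a := by rw [hNpow]
      _ ≤ (Nc.choose a : ℝ) * (((k*m:ℕ)):ℝ)^a := hrat'
  -- analytic bound on s.choose a
  have hfacpos : (0:ℝ) < (Nat.factorial a : ℝ) := by exact_mod_cast Nat.factorial_pos a
  have happow : (0:ℝ) < ((a:ℝ))^a := pow_pos hapos' a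
  have hfac : (s.choose a : ℝ) * (Nat.factorial a : ℝ) ≤ ((s:ℝ))^a := by
    have h1 : Nat.factorial a * s.choose a ≤ s ^ a :=
      (Nat.descFactorial_eq_factorial_mul_choose s a) ▸ Nat.descFactorial_le_pow s a
    calc (s.choose a : ℝ) * (Nat.factorial a : ℝ)
        = ((Nat.factorial a * s.choose a : ℕ) : ℝ) := by push_cast; ring
      _ ≤ ((s ^ a : ℕ) : ℝ) := by exact_mod_cast h1
      _ = ((s:ℝ))^a := by push_cast; ring
  have hstir : ((a:ℝ))^a ≤ (Nat.factorial a : ℝ) * Real.exp 1 ^ a := by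
    have h1 : ((a:ℝ))^a / (Nat.factorial a : ℝ) ≤ Real.exp ((a:ℝ)) :=
      Real.pow_div_factorial_le_exp ((a:ℕ):ℝ) hapos'.le a
    have h2 : Real.exp ((a:ℝ)) = Real.exp 1 ^ a := by
      rw [← Real.exp_nat_mul]; norm_num
    rw [h2, div_le_iff₀ hfacpos] at h1
    linarith [h1]
  have hexp1h : Real.exp (1 + 1/(h:ℝ)) ≤ 3.5 := by
    refine le_trans (Real.exp_le_exp.mpr ?_) exp_54_le
    have : 1/(h:ℝ) ≤ 1/4 := one_div_le_one_div_of_le (by norm_num) hh4'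
    linarith
  have hq : (s:ℝ) - m ≤ (k:ℝ) * ((s:ℝ) - m) / ((k:ℝ) - 1) := by
    rw [le_div_iff₀ hkm1]
    have h0 : (0:ℝ) ≤ (s:ℝ) - m := by linarith
    nlinarith [h0]
  have hhc : (h:ℝ) * c = 2 * k * m := by
    rw [hc]; field_simp
  have h35 : 3.5 * (s:ℝ) ≤ (h:ℝ) * a := by
    have h1 : (h:ℝ) * bound ≤ (h:ℝ) * a := mul_le_mul_of_nonneg_left hba hposh.le
    have h2 : (h:ℝ) * bound
        = 2*(k:ℝ)*m + (h:ℝ) * ((k:ℝ) * ((s:ℝ) - m) / ((k:ℝ) - 1)) := by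
      rw [hbound, mul_add, hhc]
    have h3 : (h:ℝ) * ((s:ℝ) - m) ≤ (h:ℝ) * ((k:ℝ) * ((s:ℝ) - m) / ((k:ℝ) - 1)) :=
      mul_le_mul_of_nonneg_left hq hposh.le
    have h4 : 2*(k:ℝ)*m + (h:ℝ)*((s:ℝ)-m) ≤ (h:ℝ)*(a:ℝ) := by
      rw [h2] at h1; linarith
    have h5 : (0:ℝ) ≤ ((h:ℝ)-4)*((s:ℝ)-m) :=
      mul_nonneg (by linarith) (by linarith)
    have h6 : (0:ℝ) ≤ ((k:ℝ)-2)*(m:ℝ) := mul_nonneg (by linarith) hposm.le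
    nlinarith [h4, h5, h6]
  have hkey : Real.exp 1 * s ≤ Real.exp (-1/(h:ℝ)) * ((h:ℝ) * a) := by
    have he : Real.exp 1 = Real.exp (1 + 1/(h:ℝ)) * Real.exp (-1/(h:ℝ)) := by
      rw [← Real.exp_add]; ring_nf
    have hepos : 0 < Real.exp (-1/(h:ℝ)) := Real.exp_pos _
    calc Real.exp 1 * s = Real.exp (-1/(h:ℝ)) * (Real.exp (1 + 1/(h:ℝ)) * s) := by
          rw [he]; ring
      _ ≤ Real.exp (-1/(h:ℝ)) * (3.5 * s) := by
          refine mul_le_mul_of_nonneg_left ?_ hepos.le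
          exact mul_le_mul_of_nonneg_right hexp1h (by positivity)
      _ ≤ Real.exp (-1/(h:ℝ)) * ((h:ℝ) * a) := mul_le_mul_of_nonneg_left h35 hepos.le
  have hExpA : Real.exp (-(a:ℝ)/(h:ℝ)) ≤ Real.exp (-(2*(k:ℝ)*m)/(h:ℝ)^2) := by
    apply Real.exp_le_exp.mpr
    have hca : c ≤ (a:ℝ) := le_trans hcb hba
    rw [hc] at hca
    have hca' : 2*(k:ℝ)*m ≤ (a:ℝ) * h := (div_le_iff₀ hposh).mp hca
    rw [neg_div, neg_div, neg_le_neg_iff, div_le_div_iff₀ (by positivity) hposh]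
    nlinarith [mul_le_mul_of_nonneg_right hca' hposh.le]
  have hpow : ((Real.exp 1) * s)^a
      ≤ Real.exp (-(2*(k:ℝ)*m)/(h:ℝ)^2) * ((h:ℝ) * a)^a := by
    calc ((Real.exp 1) * s)^a ≤ (Real.exp (-1/(h:ℝ)) * ((h:ℝ)*a))^a :=
          pow_le_pow_left₀ (by positivity) hkey a
      _ = Real.exp (-1/(h:ℝ))^a * ((h:ℝ)*a)^a := mul_pow _ _ _
      _ = Real.exp (-(a:ℝ)/(h:ℝ)) * ((h:ℝ)*a)^a := by
          rw [← Real.exp_nat_mul]; congr 1; ring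
      _ ≤ Real.exp (-(2*(k:ℝ)*m)/(h:ℝ)^2) * ((h:ℝ)*a)^a :=
          mul_le_mul_of_nonneg_right hExpA (by positivity)
  have hCsa : (s.choose a : ℝ) ≤ Real.exp (-(2*(k:ℝ)*m)/(h:ℝ)^2) * (h:ℝ)^a := by
    have hposfac : (0:ℝ) < (Nat.factorial a : ℝ) * ((a:ℝ))^a := by positivity
    apply le_of_mul_le_mul_right _ hposfac
    calc (s.choose a:ℝ) * ((Nat.factorial a:ℝ) * ((a:ℝ))^a)
        = ((s.choose a:ℝ) * (Nat.factorial a:ℝ)) * ((a:ℝ))^a := by ring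
      _ ≤ ((s:ℝ))^a * ((a:ℝ))^a := mul_le_mul_of_nonneg_right hfac happow.le
      _ ≤ ((s:ℝ))^a * ((Nat.factorial a:ℝ) * Real.exp 1 ^ a) :=
          mul_le_mul_of_nonneg_left hstir (by positivity)
      _ = ((Real.exp 1) * s)^a * (Nat.factorial a:ℝ) := by rw [mul_pow]; ring
      _ ≤ (Real.exp (-(2*(k:ℝ)*m)/(h:ℝ)^2) * ((h:ℝ)*a)^a) * (Nat.factorial a:ℝ) :=
          mul_le_mul_of_nonneg_right hpow hfacpos.le
      _ = (Real.exp (-(2*(k:ℝ)*m)/(h:ℝ)^2) * (h:ℝ)^a) * ((Nat.factorial a:ℝ) * ((a:ℝ))^a) := by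
          rw [mul_pow]; ring
  have hNapos : (0:ℝ) < (Nc.choose a : ℝ) := by
    exact_mod_cast Nat.choose_pos (has.trans hsN)
  have hX : ((k*m).choose a : ℝ) * (s.choose a : ℝ)
      ≤ Real.exp (-(2*(k:ℝ)*m)/(h:ℝ)^2) * (Nc.choose a : ℝ) := by
    have hpowh : (0:ℝ) < (h:ℝ)^a := pow_pos hposh a
    apply le_of_mul_le_mul_right _ hpowh
    calc ((k*m).choose a : ℝ) * (s.choose a : ℝ) * (h:ℝ)^a
        = (((k*m).choose a : ℝ) * (h:ℝ)^a) * (s.choose a : ℝ) := by ring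
      _ ≤ (Nc.choose a : ℝ) * (Real.exp (-(2*(k:ℝ)*m)/(h:ℝ)^2) * (h:ℝ)^a) :=
          mul_le_mul hB hCsa (by positivity) (by positivity)
      _ = Real.exp (-(2*(k:ℝ)*m)/(h:ℝ)^2) * (Nc.choose a : ℝ) * (h:ℝ)^a := by ring
  have hid : (Nc.choose s : ℝ) * (s.choose a : ℝ)
      = (Nc.choose a : ℝ) * ((Nc - a).choose (s - a) : ℝ) := by
    exact_mod_cast Nat.choose_mul (n := Nc) has
  have hfin : ((k*m).choose a : ℝ) * ((Nc - a).choose (s-a) : ℝ)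
      ≤ Real.exp (-(2*(k:ℝ)*m)/(h:ℝ)^2) * (Nc.choose s : ℝ) := by
    apply le_of_mul_le_mul_right _ hNapos
    calc ((k*m).choose a : ℝ) * ((Nc-a).choose (s-a) : ℝ) * (Nc.choose a : ℝ)
        = (((k*m).choose a : ℝ) * (s.choose a : ℝ)) * (Nc.choose s : ℝ) := by
          linear_combination ((k*m).choose a : ℝ) * hid.symm
      _ ≤ (Real.exp (-(2*(k:ℝ)*m)/(h:ℝ)^2) * (Nc.choose a : ℝ)) * (Nc.choose s : ℝ) :=
          mul_le_mul_of_nonneg_right hX hTpos.le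
      _ = Real.exp (-(2*(k:ℝ)*m)/(h:ℝ)^2) * (Nc.choose s : ℝ) * (Nc.choose a : ℝ) := by ring
  calc (E.card : ℝ) ≤ ((k*m).choose a : ℝ) * ((Nc-a).choose (s-a) : ℝ) := by
        exact_mod_cast hcount
    _ ≤ _ := hfin
end
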